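/- Let V : (0,∞) → ℝ be C³ with V'' < 0 and V' > 0, and let V̂(y) = sup_{x>0}(V(x) - xy) be its concave conjugate-type transform with smooth inverse relation y = V'(x), x = -V̂'(y). Then (y V̂'(y) - V̂(y))'' = (ln V')''(x) / ( V''(x) · ((ln V')'(x))² ) evaluated at x with y = V'(x). In particular, since V'' < 0, the sign of (yV̂' - V̂)'' is opposite to the sign of (ln V')''; hence (yV̂'(y) - V̂(y)) strictly convex in y implies ln V'(x) strictly concave in x. -/

import Mathlib

open Set

/-- Let `V` be `C³` with `V' > 0`, `V'' < 0` on `(0,∞)` and let `V̂` be its dual with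
`V̂(V'(x)) = V(x) - x V'(x)` and `V̂'(V'(x)) = -x`. For `W(y) = y V̂'(y) - V̂(y)` one has,
at `y = V'(x)`, `W''(y) = (ln V')''(x) / (V''(x) ((ln V')'(x))²)`; since `V'' < 0`, strict
convexity of `W` (on the range of `V'`) implies strict concavity of `ln V'` on `(0,∞)`. -/
theorem risk_aversion_duality_identity
    (V V1 V2 V3 Vh Vh1 W W1 W2 : ℝ → ℝ)
    (hV1 : ∀ x > (0:ℝ), HasDerivAt V (V1 x) x)
    (hV2 : ∀ x > (0:ℝ), HasDerivAt V1 (V2 x) x)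
    (hV3 : ∀ x > (0:ℝ), HasDerivAt V2 (V3 x) x)
    (hV3c : ContinuousOn V3 (Ioi 0))
    (hpos : ∀ x > (0:ℝ), 0 < V1 x)
    (hneg : ∀ x > (0:ℝ), V2 x < 0)
    (hVh : ∀ x > (0:ℝ), Vh (V1 x) = V x - x * V1 x)
    (hVh1 : ∀ x > (0:ℝ), Vh1 (V1 x) = -x)
    (hW : ∀ y, W y = y * Vh1 y - Vh y)
    (hW1 : ∀ x > (0:ℝ), HasDerivAt W (W1 (V1 x)) (V1 x))
    (hW2 : ∀ x > (0:ℝ), HasDerivAt W1 (W2 (V1 x)) (V1 x))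
    (L : ℝ → ℝ) (hL : ∀ x, L x = Real.log (V1 x)) :
    (∀ x > (0:ℝ), W2 (V1 x) = deriv (deriv L) x / (V2 x * (deriv L x) ^ 2)) ∧
    (StrictConvexOn ℝ (V1 '' Ioi 0) W → StrictConcaveOn ℝ (Ioi 0) L) := by
  -- basic nonvanishing
  have hV1ne : ∀ x > (0:ℝ), V1 x ≠ 0 := fun x hx => ne_of_gt (hpos x hx)
  have hV2ne : ∀ x > (0:ℝ), V2 x ≠ 0 := fun x hx => ne_of_lt (hneg x hx)
  -- W ∘ V1 = -V on Ioi 0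
  have keyWV : ∀ x > (0:ℝ), W (V1 x) = -V x := by
    intro x hx
    rw [hW, hVh1 x hx, hVh x hx]; ring
  -- first derivative identity : W1 (V1 x) = -V1 x / V2 x
  have key1 : ∀ x > (0:ℝ), W1 (V1 x) = -V1 x / V2 x := by
    intro x hx
    have hc : HasDerivAt (fun t => W (V1 t)) (W1 (V1 x) * V2 x) x :=
      (hW1 x hx).comp x (hV2 x hx)
    have heq : (fun t => W (V1 t)) =ᶠ[nhds x] fun t => -V t := by
      filter_upwards [Ioi_mem_nhds hx] with t ht
      exact keyWV t ht
    have hc' : HasDerivAt (fun t => -V t) (W1 (V1 x) * V2 x) x := hc.congr_of_eventuallyEq heq.symm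
    have hu : W1 (V1 x) * V2 x = -V1 x := hc'.unique ((hV1 x hx).neg)
    rw [eq_div_iff (hV2ne x hx)]
    exact hu
  -- second derivative identity : W2 (V1 x) = (V1 x * V3 x - V2 x ^ 2) / (V2 x) ^ 3
  have key2 : ∀ x > (0:ℝ), W2 (V1 x) = (V1 x * V3 x - V2 x ^ 2) / (V2 x) ^ 3 := by
    intro x hx
    have hc : HasDerivAt (fun t => W1 (V1 t)) (W2 (V1 x) * V2 x) x :=
      (hW2 x hx).comp x (hV2 x hx)
    have heq : (fun t => W1 (V1 t)) =ᶠ[nhds x] fun t => -V1 t / V2 t := by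
      filter_upwards [Ioi_mem_nhds hx] with t ht
      exact key1 t ht
    have hd : HasDerivAt (fun t => -V1 t / V2 t)
        ((-V2 x * V2 x - (-V1 x) * V3 x) / (V2 x) ^ 2) x :=
      ((hV2 x hx).neg).div (hV3 x hx) (hV2ne x hx)
    have hc' : HasDerivAt (fun t => -V1 t / V2 t) (W2 (V1 x) * V2 x) x :=
      hc.congr_of_eventuallyEq heq.symm
    have hu : W2 (V1 x) * V2 x = (-V2 x * V2 x - (-V1 x) * V3 x) / (V2 x) ^ 2 := hc'.unique hd
    have h2 := hV2ne x hx
    field_simp at hu ⊢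
    ring_nf
    ring_nf at hu
    linarith [hu]
  -- derivative of L
  have hLd : ∀ x > (0:ℝ), HasDerivAt L (V2 x / V1 x) x := by
    intro x hx
    have : HasDerivAt (fun t => Real.log (V1 t)) (V2 x / V1 x) x :=
      (hV2 x hx).log (hV1ne x hx)
    exact this.congr_of_eventuallyEq (by filter_upwards with t; rw [hL])
  have hderivL : ∀ x > (0:ℝ), deriv L x = V2 x / V1 x := fun x hx => (hLd x hx).deriv
  -- second derivative of L
  have hderivL2 : ∀ x > (0:ℝ),
      deriv (deriv L) x = (V3 x * V1 x - V2 x * V2 x) / (V1 x) ^ 2 := by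
    intro x hx
    have heq : deriv L =ᶠ[nhds x] fun t => V2 t / V1 t := by
      filter_upwards [Ioi_mem_nhds hx] with t ht
      exact hderivL t ht
    rw [heq.deriv_eq]
    exact (((hV3 x hx).div (hV2 x hx) (hV1ne x hx))).deriv
  constructor
  · intro x hx
    rw [key2 x hx, hderivL2 x hx, hderivL x hx]
    have h1 := hV1ne x hx
    have h2 := hV2ne x hx
    field_simp
    try ring
  · intro hconv
    -- W1 is strictly monotone on the image set
    have hmono : ∀ a > (0:ℝ), ∀ b > (0:ℝ), V1 a < V1 b → W1 (V1 a) < W1 (V1 b) := by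
      intro a ha b hb hab
      have hma : V1 a ∈ V1 '' Ioi 0 := mem_image_of_mem V1 ha
      have hmb : V1 b ∈ V1 '' Ioi 0 := mem_image_of_mem V1 hb
      exact (hconv.lt_slope_of_hasDerivAt hma hmb hab (hW1 a ha)).trans
        (hconv.slope_lt_of_hasDerivAt hma hmb hab (hW1 b hb))
    -- V1 is strictly antitone on Ioi 0
    have hV1anti : ∀ a > (0:ℝ), ∀ b > (0:ℝ), a < b → V1 b < V1 a := by
      intro a ha b hb hab
      have : StrictAntiOn V1 (Icc a b) := by
        apply strictAntiOn_of_hasDerivWithinAt_neg (convex_Icc a b)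
          (fun t ht => ((hV2 t (lt_of_lt_of_le ha ht.1)).continuousAt.continuousWithinAt))
        · intro t ht
          rw [interior_Icc] at ht
          exact ((hV2 t (ha.trans ht.1)).hasDerivWithinAt)
        · intro t ht
          rw [interior_Icc] at ht
          exact hneg t (ha.trans ht.1)
      exact this (left_mem_Icc.2 hab.le) (right_mem_Icc.2 hab.le) hab
    -- W1 (V1 x) is positive
    have hW1pos : ∀ x > (0:ℝ), 0 < W1 (V1 x) := by
      intro x hx
      rw [key1 x hx]
      exact div_pos_of_neg_of_neg (neg_neg_iff_pos.2 (hpos x hx)) (hneg x hx)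
    -- deriv L is strictly antitone on Ioi 0
    have hanti : StrictAntiOn (deriv L) (Ioi 0) := by
      intro a ha b hb hab
      rw [mem_Ioi] at ha hb
      rw [hderivL a ha, hderivL b hb]
      have h1 : W1 (V1 b) < W1 (V1 a) := hmono b hb a ha (hV1anti a ha b hb hab)
      have hpa := hW1pos a ha
      have hpb := hW1pos b hb
      have e1 : V2 a / V1 a = -1 / W1 (V1 a) := by
        rw [key1 a ha]; field_simp
      have e2 : V2 b / V1 b = -1 / W1 (V1 b) := by
        rw [key1 b hb]; field_simp
      rw [e1, e2]
      rw [div_lt_div_iff₀ hpb hpa]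
      nlinarith
    have hLc : ContinuousOn L (Ioi 0) :=
      fun x hx => ((hLd x hx).differentiableAt.continuousAt.continuousWithinAt)
    exact StrictAntiOn.strictConcaveOn_of_deriv (convex_Ioi 0) hLc
      (by rwa [interior_Ioi])
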